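/- (Lemma 1 of the paper.) Let {A⁽ⁿ⁾ : n = 1,…,N} be independent random matrices such that, for each n, the rows â⁽ⁿ⁾_{i_n} of A⁽ⁿ⁾ are mutually independent, and let â⁽ᴺ⁺¹⁾ be a random vector independent of all A⁽ⁿ⁾. Then E[‖[[A⁽¹⁾,…,A⁽ᴺ⁾; â⁽ᴺ⁺¹⁾]]‖_F²] = Σ_{i₁,…,i_N} ⟨ E[â⁽¹⁾_{i₁} â⁽¹⁾ᵀ_{i₁}], …, E[â⁽ᴺ⁾_{i_N} â⁽ᴺ⁾ᵀ_{i_N}], E[â⁽ᴺ⁺¹⁾ â⁽ᴺ⁺¹⁾ᵀ] ⟩, where the generalized inner product of N+1 matrices in ℝ^{R×R} is the sum over all (r,r') of the products of their (r,r') entries. -/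

import Mathlib

open MeasureTheory ProbabilityTheory Finset

lemma integrable_mul_of_memL2 {Ω : Type*} [MeasurableSpace Ω] {μ : Measure Ω}
    {f g : Ω → ℝ} (hf : MemLp f 2 μ) (hg : MemLp g 2 μ) :
    Integrable (fun ω => f ω * g ω) μ := by
  have h : MemLp (g • f) 1 μ := hf.smul hg
  simpa [smul_eq_mul, mul_comm, Pi.mul_def] using memLp_one_iff_integrable.mp h

lemma indep_prod_integrable_and_integral {ι Ω : Type*} [MeasurableSpace Ω] {μ : Measure Ω}
    [IsProbabilityMeasure μ] {g : ι → Ω → ℝ} (hmeas : ∀ i, Measurable (g i))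
    (hint : ∀ i, Integrable (g i) μ)
    (hindep : iIndepFun g μ) (s : Finset ι) :
    Integrable (fun ω => ∏ i ∈ s, g i ω) μ ∧
      ∫ ω, ∏ i ∈ s, g i ω ∂μ = ∏ i ∈ s, ∫ ω, g i ω ∂μ := by
  classical
  induction s using Finset.induction with
  | empty => simp
  | @insert a s ha ih =>
    have hind : IndepFun (∏ j ∈ s, g j) (g a) μ :=
      hindep.indepFun_finsetProd_of_notMem hmeas ha
    have hprodint : Integrable (∏ j ∈ s, g j) μ := by
      simpa [Finset.prod_fn] using ih.1
    have h1 : Integrable (fun ω => ∏ i ∈ insert a s, g i ω) μ := by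
      simp only [Finset.prod_insert ha]
      have h := hind.integrable_mul hprodint (hint a)
      have h' : (fun ω => g a ω * ∏ i ∈ s, g i ω) = (∏ j ∈ s, g j) * g a := by
        ext ω; simp [mul_comm]
      rw [h']; exact h
    refine ⟨h1, ?_⟩
    have h2 := hind.integral_mul_eq_mul_integral hprodint.1 (hint a).1
    simp only [Finset.prod_insert ha]
    calc ∫ ω, g a ω * ∏ i ∈ s, g i ω ∂μ
        = ∫ ω, ((∏ j ∈ s, g j) * g a) ω ∂μ := by
          congr 1; ext ω; simp [mul_comm]
      _ = (∫ ω, (∏ j ∈ s, g j) ω ∂μ) * ∫ ω, g a ω ∂μ := h2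
      _ = (∫ ω, g a ω ∂μ) * ∏ i ∈ s, ∫ ω, g i ω ∂μ := by
          rw [mul_comm]; congr 1
          simpa [Finset.prod_fn] using ih.2
/-- Lemma 1 of the paper: if the rows of the random factor matrices `A⁽¹⁾,…,A⁽ᴺ⁾` and the
random vector `â⁽ᴺ⁺¹⁾` are all mutually independent (equivalently: the matrices are
independent, the rows within each matrix are independent, and `â⁽ᴺ⁺¹⁾` is independent of
all of them), then
`E‖[[A⁽¹⁾,…,A⁽ᴺ⁾; â⁽ᴺ⁺¹⁾]]‖_F² = Σ_i ⟨E[â⁽¹⁾_{i₁}â⁽¹⁾ᵀ_{i₁}],…,E[â⁽ᴺ⁺¹⁾â⁽ᴺ⁺¹⁾ᵀ]⟩`,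
where the generalized inner product of `R×R` matrices sums over all `(r,r')` the products
of their `(r,r')` entries. -/
theorem expected_frobenius_sq_cp
    {Ω : Type*} [MeasurableSpace Ω] (P : Measure Ω) [IsProbabilityMeasure P]
    {N R : ℕ} {I : Fin N → ℕ}
    (A : ∀ n, Ω → Fin (I n) → Fin R → ℝ)   -- rows of the random factor matrices
    (aT : Ω → Fin R → ℝ)                    -- the extra (temporal) random vector
    (hmeasA : ∀ n i, Measurable (fun ω => A n ω i))
    (hmeasT : Measurable aT)
    (hL2A : ∀ n i r, MemLp (fun ω => A n ω i r) 2 P)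
    (hL2T : ∀ r, MemLp (fun ω => aT ω r) 2 P)
    (f : Option ((n : Fin N) × Fin (I n)) → Ω → Fin R → ℝ)
    (hf_some : ∀ n i, f (some ⟨n, i⟩) = fun ω => A n ω i)
    (hf_none : f none = aT)
    (hindep : iIndepFun f P) :
    ∫ ω, ∑ i : (∀ n, Fin (I n)), (∑ r, (∏ n, A n ω (i n) r) * aT ω r) ^ 2 ∂P
      = ∑ i : (∀ n, Fin (I n)), ∑ r, ∑ r',
          (∏ n, ∫ ω, A n ω (i n) r * A n ω (i n) r' ∂P) *
            ∫ ω, aT ω r * aT ω r' ∂P := by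
  classical
  have hfm : ∀ j, Measurable (f j) := by
    rintro (_ | ⟨n, k⟩)
    · rw [hf_none]; exact hmeasT
    · rw [hf_some]; exact hmeasA n k
  have key : ∀ (i : ∀ n, Fin (I n)) (r r' : Fin R),
      Integrable (fun ω => ((∏ n, A n ω (i n) r) * aT ω r) *
        ((∏ n, A n ω (i n) r') * aT ω r')) P ∧
      ∫ ω, ((∏ n, A n ω (i n) r) * aT ω r) * ((∏ n, A n ω (i n) r') * aT ω r') ∂P
        = (∏ n, ∫ ω, A n ω (i n) r * A n ω (i n) r' ∂P) * ∫ ω, aT ω r * aT ω r' ∂P := by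
    intro i r r'
    set g : Option ((n : Fin N) × Fin (I n)) → Ω → ℝ :=
      fun j ω => f j ω r * f j ω r' with hgdef
    have hgmeas : ∀ j, Measurable (g j) := fun j =>
      ((measurable_pi_apply r).comp (hfm j)).mul ((measurable_pi_apply r').comp (hfm j))
    have hgindep : iIndepFun g P :=
      hindep.comp (fun _ v => v r * v r')
        (fun _ => (measurable_pi_apply r).mul (measurable_pi_apply r'))
    have hgint : ∀ j, Integrable (g j) P := by
      rintro (_ | ⟨n, k⟩)
      · simp only [hgdef, hf_none]; exact integrable_mul_of_memL2 (hL2T r) (hL2T r')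
      · simp only [hgdef, hf_some]; exact integrable_mul_of_memL2 (hL2A n k r) (hL2A n k r')
    have hinj : Function.Injective
        (fun n : Fin N => (some ⟨n, i n⟩ : Option ((n : Fin N) × Fin (I n)))) := by
      intro a b h
      exact congrArg Sigma.fst (Option.some_injective _ h)
    set S : Finset (Option ((n : Fin N) × Fin (I n))) :=
      insert none (Finset.univ.image fun n => some ⟨n, i n⟩) with hSdef
    have hnone : (none : Option ((n : Fin N) × Fin (I n))) ∉
        (Finset.univ.image fun n => some ⟨n, i n⟩) := by simp
    obtain ⟨hIntS, hEqS⟩ := indep_prod_integrable_and_integral hgmeas hgint hgindep S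
    have hprod : ∀ ω, ∏ j ∈ S, g j ω
        = ((∏ n, A n ω (i n) r) * aT ω r) * ((∏ n, A n ω (i n) r') * aT ω r') := by
      intro ω
      rw [hSdef, Finset.prod_insert hnone, Finset.prod_image (fun a _ b _ h => hinj h)]
      simp only [hgdef, hf_none, hf_some]
      rw [Finset.prod_mul_distrib]; ring
    have hprodI : ∏ j ∈ S, ∫ ω, g j ω ∂P
        = (∏ n, ∫ ω, A n ω (i n) r * A n ω (i n) r' ∂P) * ∫ ω, aT ω r * aT ω r' ∂P := by
      rw [hSdef, Finset.prod_insert hnone, Finset.prod_image (fun a _ b _ h => hinj h)]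
      simp only [hgdef, hf_none, hf_some]
      rw [mul_comm]
    constructor
    · exact (funext hprod) ▸ hIntS
    · calc ∫ ω, ((∏ n, A n ω (i n) r) * aT ω r) * ((∏ n, A n ω (i n) r') * aT ω r') ∂P
          = ∫ ω, ∏ j ∈ S, g j ω ∂P := by rw [funext hprod]
        _ = ∏ j ∈ S, ∫ ω, g j ω ∂P := hEqS
        _ = _ := hprodI
  simp_rw [sq, Finset.sum_mul_sum]
  rw [integral_finset_sum]
  · refine Finset.sum_congr rfl fun i _ => ?_
    rw [integral_finset_sum]
    · refine Finset.sum_congr rfl fun r _ => ?_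
      rw [integral_finset_sum]
      · exact Finset.sum_congr rfl fun r' _ => (key i r r').2
      · exact fun r' _ => (key i r r').1
    · exact fun r _ => integrable_finset_sum _ fun r' _ => (key i r r').1
  · exact fun i _ => integrable_finset_sum _ fun r _ =>
      integrable_finset_sum _ fun r' _ => (key i r r').1
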